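/- Let n ≥ 3 and let a_1 ≤ a_2 ≤ ⋯ ≤ a_n be positive integers that are pairwise coprime (gcd(a_i, a_j) = 1 for all i ≠ j). Then every integer b > UB_1(a_1, a_2, a_3) can be written as a_1x_1 + ⋯ + a_nx_n with nonnegative integers x_1, …, x_n; that is, F(a_1, …, a_n) ≤ (1/2)(√((1/3)(a_1 + a_2 + a_3)(a_1 + a_2 + a_3 + 2a_1a_2a_3) + (8/3)(a_1a_2 + a_2a_3 + a_3a_1)) − a_1 − a_2 − a_3). -/

import Mathlib

lemma sum_distinct_lower (S : Finset ℕ) : S.card * S.card ≤ 2 * (∑ x ∈ S, x) + S.card := by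
  induction S using Finset.strongInduction with
  | _ S ih =>
    rcases S.eq_empty_or_nonempty with rfl | hS
    · simp
    · have hM := S.max'_mem hS
      set M := S.max' hS with hMdef
      have hsub : S ⊆ Finset.range (M+1) :=
        fun x hx => Finset.mem_range.2 (Nat.lt_succ_of_le (S.le_max' x hx))
      have hcard : S.card ≤ M + 1 := by
        calc S.card ≤ (Finset.range (M+1)).card := Finset.card_le_card hsub
        _ = M + 1 := by simp
      have h2 := ih (S.erase M) (Finset.erase_ssubset hM)
      have hsum : ∑ x ∈ S, x = M + ∑ x ∈ S.erase M, x := (Finset.add_sum_erase _ _ hM).symm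
      have hc : (S.erase M).card = S.card - 1 := Finset.card_erase_of_mem hM
      obtain ⟨t, ht⟩ : ∃ t, S.card = t + 1 := ⟨S.card - 1, by
        have := Finset.card_pos.2 hS; omega⟩
      rw [hc, ht] at h2
      simp only [Nat.add_sub_cancel] at h2
      rw [hsum, ht]
      have htM : t ≤ M := by omega
      nlinarith [h2, htM]

lemma sum_upper {p u : ℕ} {S : Finset ℕ} (hsub : S ⊆ Finset.range p)
    (hu : S.card + u = p) : 2 * (∑ x ∈ S, x) + u * u + p ≤ p * p + u := by
  have hcardT : (Finset.range p \ S).card = u := by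
    rw [Finset.card_sdiff_of_subset hsub, Finset.card_range]; omega
  have hsplit : (∑ x ∈ Finset.range p \ S, x) + (∑ x ∈ S, x) = ∑ x ∈ Finset.range p, x :=
    Finset.sum_sdiff hsub
  have hgauss : (∑ x ∈ Finset.range p, x) * 2 = p * (p - 1) := Finset.sum_range_id_mul_two p
  have hlow := sum_distinct_lower (Finset.range p \ S)
  rw [hcardT] at hlow
  rcases Nat.eq_zero_or_pos p with rfl | hp
  · have : S = ∅ := Finset.subset_empty.mp (by simpa using hsub)
    subst this; simp at hu ⊢; omega
  · have h1 : p * (p-1) + p = p * p := by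
      cases p with
      | zero => omega
      | succ q => simp [Nat.succ_sub_one]; ring
    omega

lemma periodic_sum_bound (p : ℕ) (hp : 0 < p) (f : ℕ → ℕ)
    (hper : ∀ z, f (z + p) = f z) (hlt : ∀ z, f z < p)
    (hinj : ∀ z₁ z₂, z₁ < p → z₂ < p → f z₁ = f z₂ → z₁ = z₂) (N : ℕ) :
    8 * (∑ z ∈ Finset.range N, f z) + 4 * N ≤ 4 * N * p + p * p := by
  -- sum over a full period
  have hinj' : Set.InjOn f (Finset.range p) := by
    intro x hx y hy hxy
    exact hinj x y (Finset.mem_range.1 hx) (Finset.mem_range.1 hy) hxy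
  have himg : Finset.image f (Finset.range p) = Finset.range p := by
    apply Finset.eq_of_subset_of_card_le
    · intro x hx
      obtain ⟨z, _, rfl⟩ := Finset.mem_image.1 hx
      exact Finset.mem_range.2 (hlt z)
    · rw [Finset.card_image_of_injOn hinj', Finset.card_range]
  have hfull : ∑ z ∈ Finset.range p, f z = ∑ x ∈ Finset.range p, x := by
    conv_rhs => rw [← himg]
    rw [Finset.sum_image (fun x hx y hy => hinj' hx hy)]
  have hgauss : (∑ x ∈ Finset.range p, x) * 2 = p * (p - 1) := Finset.sum_range_id_mul_two p
  have hfull2 : 2 * (∑ z ∈ Finset.range p, f z) + p = p * p := by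
    rw [hfull]
    cases p with
    | zero => omega
    | succ q => simp [Nat.succ_sub_one] at hgauss ⊢; nlinarith [hgauss]
  -- block decomposition
  set t := N % p with htdef
  set q := N / p with hqdef
  have hN : q * p + t = N := by rw [htdef, hqdef, Nat.mul_comm]; exact Nat.div_add_mod N p
  have htp : t < p := Nat.mod_lt _ hp
  have hblock : ∀ k, (∑ z ∈ Finset.range (k*p + t), f z)
      = k * (∑ z ∈ Finset.range p, f z) + ∑ z ∈ Finset.range t, f z := by
    intro k
    induction k with
    | zero => simp
    | succ k ih =>
      have : (k+1)*p + t = p + (k*p + t) := by ring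
      rw [this, Finset.sum_range_add]
      have : ∀ i, f (p + i) = f i := by
        intro i; rw [Nat.add_comm, hper]
      simp only [this]
      rw [ih]; ring
  -- partial block
  have hpart : 2 * (∑ z ∈ Finset.range t, f z) + (p - t) * (p - t) + p ≤ p * p + (p - t) := by
    have hinjt : Set.InjOn f (Finset.range t) := by
      intro x hx y hy hxy
      exact hinj x y (lt_trans (Finset.mem_range.1 hx) htp) (lt_trans (Finset.mem_range.1 hy) htp) hxy
    have hsumt : ∑ z ∈ Finset.range t, f z = ∑ x ∈ Finset.image f (Finset.range t), x := by
      rw [Finset.sum_image (fun x hx y hy => hinjt hx hy)]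
    rw [hsumt]
    apply sum_upper
    · intro x hx
      obtain ⟨z, _, rfl⟩ := Finset.mem_image.1 hx
      exact Finset.mem_range.2 (hlt z)
    · rw [Finset.card_image_of_injOn hinjt, Finset.card_range]; omega
  -- combine
  rw [← hN, hblock]
  have hu : t + (p - t) = p := by omega
  zify [htp.le] at hpart hfull2 ⊢
  nlinarith [hpart, hfull2, sq_nonneg ((p:ℤ) - 2*(p - t))]


/-- canonical `y` with `b*y ≡ k (mod a)`, `0 ≤ y < a`. -/
noncomputable def resY (a b : ℕ) (k : ℤ) : ℕ := (((k : ZMod a)) * (b : ZMod a)⁻¹).val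

lemma resY_lt (a b : ℕ) (ha : 0 < a) (k : ℤ) : resY a b k < a := by
  haveI : NeZero a := ⟨ha.ne'⟩
  exact ZMod.val_lt _

lemma resY_spec (a b : ℕ) (ha : 0 < a) (hba : Nat.Coprime b a) (k : ℤ) :
    (a:ℤ) ∣ k - b * resY a b k := by
  haveI : NeZero a := ⟨ha.ne'⟩
  rw [← ZMod.intCast_zmod_eq_zero_iff_dvd]
  push_cast
  unfold resY
  rw [ZMod.natCast_val, ZMod.cast_id]
  rw [show ((b:ZMod a)) * ((k : ZMod a) * (b : ZMod a)⁻¹) = (k:ZMod a) * ((b:ZMod a) * (b:ZMod a)⁻¹) by ring,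
    ZMod.coe_mul_inv_eq_one b hba]
  ring

lemma resY_period (a b c : ℕ) (m : ℤ) (z : ℕ) :
    resY a b (m - c * (z + a)) = resY a b (m - c * z) := by
  unfold resY
  congr 2
  push_cast
  rw [ZMod.natCast_self]
  ring

lemma resY_inj (a b c : ℕ) (ha : 0 < a) (hba : Nat.Coprime b a) (hca : Nat.Coprime c a) (m : ℤ)
    (z₁ z₂ : ℕ) (h₁ : z₁ < a) (h₂ : z₂ < a)
    (h : resY a b (m - c * z₁) = resY a b (m - c * z₂)) : z₁ = z₂ := by
  haveI : NeZero a := ⟨ha.ne'⟩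
  unfold resY at h
  have h' : ((m - c * z₁ : ℤ) : ZMod a) * (b : ZMod a)⁻¹ = ((m - c * z₂ : ℤ) : ZMod a) * (b : ZMod a)⁻¹ := by
    have := congrArg (Nat.cast : ℕ → ZMod a) h
    rwa [ZMod.natCast_val, ZMod.cast_id, ZMod.natCast_val, ZMod.cast_id] at this
  have hb1 : (b : ZMod a) * (b : ZMod a)⁻¹ = 1 := ZMod.coe_mul_inv_eq_one b hba
  have hc1 : (c : ZMod a) * (c : ZMod a)⁻¹ = 1 := ZMod.coe_mul_inv_eq_one c hca
  have h2 : ((m - c * z₁ : ℤ) : ZMod a) = ((m - c * z₂ : ℤ) : ZMod a) := by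
    have := congrArg (· * (b : ZMod a)) h'
    simpa [mul_assoc, mul_comm (b : ZMod a)⁻¹ (b : ZMod a), hb1] using this
  have h3 : ((z₁ : ℕ) : ZMod a) = ((z₂ : ℕ) : ZMod a) := by
    push_cast at h2
    have hc : (c : ZMod a) * (z₁ : ZMod a) = (c : ZMod a) * (z₂ : ZMod a) := by
      linear_combination -h2
    have := congrArg (fun x => (c : ZMod a)⁻¹ * x) hc
    simpa [← mul_assoc, mul_comm (c : ZMod a)⁻¹ (c : ZMod a), hc1] using this
  have := congrArg ZMod.val h3
  rwa [ZMod.val_cast_of_lt h₁, ZMod.val_cast_of_lt h₂] at this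

lemma lemA (a b : ℕ) (ha : 0 < a) (hb : 0 < b) (hab : Nat.Coprime a b)
    (k : ℤ) (hk : 0 ≤ k) (hnr : ∀ x y : ℕ, k ≠ a * x + b * y) :
    k + a * b = b * resY a b k + a * resY b a k := by
  haveI : NeZero a := ⟨ha.ne'⟩
  haveI : NeZero b := ⟨hb.ne'⟩
  obtain ⟨K, hK⟩ := resY_spec a b ha hab.symm k
  set Y := resY a b k with hYdef
  have hYlt : Y < a := resY_lt a b ha k
  have hKneg : K < 0 := by
    by_contra hKn
    push_neg at hKn
    exact hnr K.toNat Y (by push_cast [Int.toNat_of_nonneg hKn]; linarith [hK])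
  have hKgt : -(b:ℤ) < K := by
    have hYa : ((Y:ℕ):ℤ) < (a:ℤ) := by exact_mod_cast hYlt
    have hb0 : (0:ℤ) < b := by exact_mod_cast hb
    have ha0 : (0:ℤ) < a := by exact_mod_cast ha
    nlinarith [hK, hk, hYa, hb0, ha0]
  -- W' = K + b
  set W' : ℤ := K + b with hW'
  have hW'pos : 0 < W' := by omega
  have hW'lt : W' < b := by omega
  -- k + a*b = b*Y + a*W'
  have hkey : k + a * b = b * Y + a * W' := by
    rw [hW']; linarith [hK]
  -- show W'.toNat = resY b a k
  have hWcast : ((W'.toNat : ℕ) : ZMod b) = ((k : ZMod b)) * (a : ZMod b)⁻¹ := by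
    have hdvd : (b:ℤ) ∣ k - a * W' := ⟨(Y:ℤ) - a, by rw [hW']; linear_combination hK⟩
    have : ((k - a * W' : ℤ) : ZMod b) = 0 := (ZMod.intCast_zmod_eq_zero_iff_dvd _ b).mpr hdvd
    push_cast at this
    have hW'z : ((W'.toNat : ℕ) : ZMod b) = ((W' : ℤ) : ZMod b) := by
      rw [← Int.cast_natCast, Int.toNat_of_nonneg hW'pos.le]
    have ha1 : (a : ZMod b) * (a : ZMod b)⁻¹ = 1 := ZMod.coe_mul_inv_eq_one a hab
    have hak : (a : ZMod b) * ((W' : ℤ) : ZMod b) = (k : ZMod b) := by linear_combination -this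
    rw [hW'z]
    calc ((W' : ℤ) : ZMod b) = ((a : ZMod b) * (a : ZMod b)⁻¹) * ((W' : ℤ) : ZMod b) := by rw [ha1, one_mul]
    _ = ((a : ZMod b) * ((W' : ℤ) : ZMod b)) * (a : ZMod b)⁻¹ := by ring
    _ = (k : ZMod b) * (a : ZMod b)⁻¹ := by rw [hak]
  have hWval : W'.toNat = resY b a k := by
    unfold resY
    rw [← hWcast, ZMod.val_cast_of_lt (by omega : W'.toNat < b)]
  rw [← hWval]
  rw [hkey, Int.toNat_of_nonneg hW'pos.le]

lemma keyIneq (a b c : ℕ) (ha : 0 < a) (hb : 0 < b) (hc : 0 < c)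
    (hab : Nat.Coprime a b) (hac : Nat.Coprime a c) (hbc : Nat.Coprime b c)
    (m : ℤ) (hm : 0 ≤ m)
    (hnr : ∀ x y z : ℕ, m ≠ a * x + b * y + c * z) :
    4 * m * (m + a + b + c) ≤ (a:ℤ) * b * c * (a + b) := by
  have ha0 : (0:ℤ) < a := by exact_mod_cast ha
  have hb0 : (0:ℤ) < b := by exact_mod_cast hb
  have hc0 : (0:ℤ) < c := by exact_mod_cast hc
  set Z : ℕ := m.toNat / c with hZdef
  set N : ℕ := Z + 1 with hNdef
  have hmtn : (m.toNat : ℤ) = m := Int.toNat_of_nonneg hm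
  obtain ⟨r, hr, hZc⟩ : ∃ r, r < c ∧ c * Z + r = m.toNat :=
    ⟨m.toNat % c, Nat.mod_lt _ hc, Nat.div_add_mod m.toNat c⟩
  set ρ : ℤ := (r : ℤ) with hρdef
  have hρ0 : 0 ≤ ρ := Int.natCast_nonneg _
  have hρc : ρ < c := by rw [hρdef]; exact_mod_cast hr
  have hcZ : (c:ℤ) * Z = m - ρ := by
    have h := congrArg (Nat.cast : ℕ → ℤ) hZc
    push_cast at h
    rw [hmtn] at h
    linarith
  set F : ℕ → ℕ := fun z => resY a b (m - c * z) with hFdef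
  set G : ℕ → ℕ := fun z => resY b a (m - c * z) with hGdef
  have hk0 : ∀ z ∈ Finset.range N, 0 ≤ m - c * z := by
    intro z hz
    have hzZ : z ≤ Z := by have := Finset.mem_range.1 hz; omega
    have : (c:ℤ) * z ≤ c * Z := by
      apply mul_le_mul_of_nonneg_left _ hc0.le; exact_mod_cast hzZ
    linarith [hcZ, hρ0]
  have hkey : ∀ z ∈ Finset.range N, m - c*z + a*b = (b:ℤ) * F z + a * G z := by
    intro z hz
    exact lemA a b ha hb hab (m - c*z) (hk0 z hz)
      (fun x y hxy => hnr x y z (by linarith))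
  set SZ : ℤ := ∑ z ∈ Finset.range N, (z:ℤ) with hSZdef
  set SF : ℤ := ∑ z ∈ Finset.range N, ((F z : ℕ) : ℤ) with hSFdef
  set SG : ℤ := ∑ z ∈ Finset.range N, ((G z : ℕ) : ℤ) with hSGdef
  have hsum1 : (∑ z ∈ Finset.range N, (m - c*z + a*b)) = (b:ℤ) * SF + a * SG := by
    rw [Finset.sum_congr rfl hkey, Finset.sum_add_distrib, ← Finset.mul_sum, ← Finset.mul_sum]
  have hsum2 : (∑ z ∈ Finset.range N, (m - c*z + a*b)) = N*(m + a*b) - c * SZ := by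
    simp only [Finset.sum_add_distrib, Finset.sum_sub_distrib, Finset.sum_const,
      Finset.card_range, nsmul_eq_mul, ← Finset.mul_sum, ← hSZdef]
    ring
  have E1 : (N:ℤ)*(m + a*b) - c * SZ = b * SF + a * SG := by rw [← hsum2, hsum1]
  have hN1 : (N:ℤ) = (Z:ℤ) + 1 := by rw [hNdef]; push_cast; ring
  have hSZc : 2 * SZ = (N:ℤ) * Z := by
    have h1 : (∑ z ∈ Finset.range N, z) * 2 = N * Z := by
      rw [Finset.sum_range_id_mul_two]; simp [hNdef]
    have h2 := congrArg (Nat.cast : ℕ → ℤ) h1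
    push_cast at h2
    rw [hSZdef, hN1]
    rw [hN1] at h2
    linarith [h2]
  have hFbound : 8 * SF + 4 * (N:ℤ) ≤ 4 * N * a + a * a := by
    have h := periodic_sum_bound a ha F
      (fun z => resY_period a b c m z)
      (fun z => resY_lt a b ha _)
      (fun z₁ z₂ h₁ h₂ h => resY_inj a b c ha hab.symm hac.symm m z₁ z₂ h₁ h₂ h) N
    have hcast := (Nat.cast_le (α := ℤ)).mpr h
    push_cast at hcast
    rw [hSFdef, hN1]
    rw [hN1] at hcast
    linarith [hcast]
  have hGbound : 8 * SG + 4 * (N:ℤ) ≤ 4 * N * b + b * b := by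
    have h := periodic_sum_bound b hb G
      (fun z => resY_period b a c m z)
      (fun z => resY_lt b a hb _)
      (fun z₁ z₂ h₁ h₂ h => resY_inj b a c hb hab hbc.symm m z₁ z₂ h₁ h₂ h) N
    have hcast := (Nat.cast_le (α := ℤ)).mpr h
    push_cast at hcast
    rw [hSGdef, hN1]
    rw [hN1] at hcast
    linarith [hcast]
  -- combine to h4
  have h4 : 4*(N:ℤ)*(m + ρ + a + b) ≤ a*b*(a+b) := by
    have hbF := mul_le_mul_of_nonneg_left hFbound hb0.le
    have haG := mul_le_mul_of_nonneg_left hGbound ha0.le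
    -- 8*(E1): 8N(m+ab) - 8c SZ = 8b SF + 8a SG ; 8cSZ = 4c*(2SZ) = 4c*N*Z = 4N(m-ρ)
    have hcSZ : (c:ℤ) * (2 * SZ) = (N:ℤ) * (m - ρ) := by
      rw [hSZc, ← mul_assoc, mul_comm (c:ℤ) (N:ℤ), mul_assoc, hcZ]
    linarith [E1, hbF, haG, hcSZ]
  have hcN : (c:ℤ) * N = m - ρ + c := by rw [hN1]; linarith [hcZ]
  have h5 := mul_le_mul_of_nonneg_left h4 hc0.le
  have h7 : ((c:ℤ) * N) * (m + ρ + a + b) = (m - ρ + c) * (m + ρ + a + b) := by rw [hcN]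
  have h6 : 4 * (m + c - ρ) * (m + ρ + a + b) ≤ (a:ℤ)*b*c*(a+b) := by linarith [h5, h7]
  linarith [h6, mul_nonneg (by linarith : (0:ℤ) ≤ c - ρ) (by linarith : (0:ℤ) ≤ ρ + a + b)]


lemma tineq (a b c : ℕ) (ha : 0 < a) (h1 : a ≤ b) (h2 : b ≤ c)
    (hab : Nat.Coprime a b) (hbc : Nat.Coprime b c) :
    3*(a*b*c)*(a+b) + 2*(a*a+b*b+c*c) ≤ 2*(a*b*c)*(a+b+c) + 4*(a*b+b*c+c*a) := by
  zify
  have ha0 : (1:ℤ) ≤ a := by exact_mod_cast ha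
  have h1' : (a:ℤ) ≤ b := by exact_mod_cast h1
  have h2' : (b:ℤ) ≤ c := by exact_mod_cast h2
  rcases Nat.lt_or_ge a 2 with ha2 | ha2
  · -- a = 1
    have ha1 : a = 1 := by omega
    subst ha1
    rcases Nat.lt_or_ge b 2 with hb2 | hb2
    · have hb1 : b = 1 := by omega
      subst hb1
      push_cast
      nlinarith [h2']
    · -- b ≥ 2, so b ≠ c hence c ≥ b + 1
      have hbc' : b ≠ c := by
        intro h; rw [h] at hbc; simp [Nat.Coprime, Nat.gcd_self] at hbc; omega
      have hc : (b:ℤ) + 1 ≤ c := by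
        have : b < c := lt_of_le_of_ne h2 hbc'; exact_mod_cast this
      have hb2' : (2:ℤ) ≤ b := by exact_mod_cast hb2
      push_cast
      nlinarith [hc, hb2', mul_nonneg (by linarith : (0:ℤ) ≤ (b:ℤ)) (by linarith : (0:ℤ) ≤ (c:ℤ) - b - 1)]
  · -- a ≥ 2: a < b < c
    have hab' : a ≠ b := by
      intro h; rw [h] at hab; simp [Nat.Coprime, Nat.gcd_self] at hab; omega
    have hbc' : b ≠ c := by
      intro h; rw [h] at hbc; simp [Nat.Coprime, Nat.gcd_self] at hbc; omega
    have hb : (a:ℤ) + 1 ≤ b := by exact_mod_cast lt_of_le_of_ne h1 hab'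
    have hc : (b:ℤ) + 1 ≤ c := by exact_mod_cast lt_of_le_of_ne h2 hbc'
    have ha2' : (2:ℤ) ≤ a := by exact_mod_cast ha2
    have hab6 : (6:ℤ) ≤ a * b := by nlinarith
    have h3 : (3:ℤ) ≤ 2*c - a - b := by linarith
    have key : (6:ℤ)*c*(2*c-a-b) ≤ a*b*c*(2*c-a-b) := by
      have hcpos : (0:ℤ) ≤ c := by linarith
      nlinarith [mul_nonneg (mul_nonneg (by linarith : (0:ℤ) ≤ a*b - 6) hcpos) (by linarith : (0:ℤ) ≤ 2*c-a-b)]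
    nlinarith [key, mul_nonneg (by linarith : (0:ℤ) ≤ (c:ℤ)-a) (by linarith : (0:ℤ) ≤ (c:ℤ)),
      mul_nonneg (by linarith : (0:ℤ) ≤ (c:ℤ)-b) (by linarith : (0:ℤ) ≤ (c:ℤ)),
      mul_nonneg (by linarith : (0:ℤ) ≤ (c:ℤ)-a) (by linarith : (0:ℤ) ≤ (c:ℤ)+a),
      mul_nonneg (by linarith : (0:ℤ) ≤ (c:ℤ)-b) (by linarith : (0:ℤ) ≤ (c:ℤ)+b),
      mul_nonneg (by linarith : (0:ℤ) ≤ (a:ℤ)) (by linarith : (0:ℤ) ≤ (b:ℤ)),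
      mul_nonneg (by linarith : (0:ℤ) ≤ (c:ℤ)) (by linarith : (0:ℤ) ≤ (c:ℤ))]

lemma sqineq (a b c : ℕ) (ha : 0 < a) (h1 : a ≤ b) (h2 : b ≤ c) :
    a*a + b*b + c*c ≤ (a*b*c)*(a+b+c) := by
  zify
  have ha0 : (1:ℤ) ≤ a := by exact_mod_cast ha
  have h1' : (a:ℤ) ≤ b := by exact_mod_cast h1
  have h2' : (b:ℤ) ≤ c := by exact_mod_cast h2
  have hb0 : (1:ℤ) ≤ b := by linarith
  have hc0 : (1:ℤ) ≤ c := by linarith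
  have hcs : (a:ℤ)*a + b*b + c*c ≤ c*(a+b+c) := by nlinarith
  have : (c:ℤ)*(a+b+c) ≤ a*b*c*(a+b+c) := by
    nlinarith [mul_nonneg (mul_nonneg (by nlinarith : (0:ℤ) ≤ (a:ℤ)*b - 1) (by linarith : (0:ℤ) ≤ (c:ℤ))) (by linarith : (0:ℤ) ≤ (a:ℤ)+b+c)]
  linarith

/-- The corrected upper bound `UB₁` obtained from the argument of Beck et al. -/
noncomputable def UB₁ (a₁ a₂ a₃ : ℝ) : ℝ :=
  (1 / 2) * (Real.sqrt ((1 / 3) * (a₁ + a₂ + a₃) * (a₁ + a₂ + a₃ + 2 * a₁ * a₂ * a₃)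
      + (8 / 3) * (a₁ * a₂ + a₂ * a₃ + a₃ * a₁)) - a₁ - a₂ - a₃)

set_option maxHeartbeats 1000000 in
/-- Let `n ≥ 3` and let `a 1 ≤ a 2 ≤ ⋯ ≤ a n` be pairwise coprime positive
integers. Then every integer `b > UB₁ (a 1) (a 2) (a 3)` is a nonnegative
integral combination of the `a i`; that is, `F(a) ≤ UB₁ (a 1) (a 2) (a 3)`. -/
theorem frobenius_le_UB₁ (n : ℕ) (hn : 3 ≤ n) (a : Fin n → ℕ)
    (hpos : ∀ i, 0 < a i) (hmono : Monotone a)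
    (hcop : ∀ i j, i ≠ j → Nat.gcd (a i) (a j) = 1) :
    ∀ b : ℤ, (b : ℝ) > UB₁ (a ⟨0, by omega⟩ : ℕ) (a ⟨1, by omega⟩ : ℕ) (a ⟨2, by omega⟩ : ℕ) →
      ∃ x : Fin n → ℕ, b = ∑ i, (a i : ℤ) * (x i : ℤ) := by
  intro m hm
  by_contra hcon
  push_neg at hcon
  set i0 : Fin n := ⟨0, by omega⟩ with hi0
  set i1 : Fin n := ⟨1, by omega⟩ with hi1
  set i2 : Fin n := ⟨2, by omega⟩ with hi2
  set A := a i0 with hA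
  set B := a i1 with hB
  set C := a i2 with hC
  have hApos := hpos i0
  have hBpos := hpos i1
  have hCpos := hpos i2
  have hne01 : i0 ≠ i1 := by simp [hi0, hi1, Fin.ext_iff]
  have hne02 : i0 ≠ i2 := by simp [hi0, hi2, Fin.ext_iff]
  have hne12 : i1 ≠ i2 := by simp [hi1, hi2, Fin.ext_iff]
  have hAB : Nat.Coprime A B := hcop i0 i1 hne01
  have hAC : Nat.Coprime A C := hcop i0 i2 hne02
  have hBC : Nat.Coprime B C := hcop i1 i2 hne12
  have hle1 : A ≤ B := hmono (by simp [hi0, hi1, Fin.mk_le_mk])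
  have hle2 : B ≤ C := hmono (by simp [hi1, hi2, Fin.mk_le_mk])
  -- non-representability by the first three
  have hnr : ∀ x y z : ℕ, m ≠ A * x + B * y + C * z := by
    intro x y z hxyz
    apply hcon (fun i => if i = i0 then x else if i = i1 then y else if i = i2 then z else 0)
    rw [hxyz]
    have hsub : ({i0, i1, i2} : Finset (Fin n)) ⊆ Finset.univ := Finset.subset_univ _
    rw [show (∑ i, (a i : ℤ) * (if i = i0 then (x:ℕ) else if i = i1 then y else if i = i2 then z else 0 : ℕ))
        = ∑ i ∈ ({i0, i1, i2} : Finset (Fin n)), (a i : ℤ) * (if i = i0 then (x:ℕ) else if i = i1 then y else if i = i2 then z else 0 : ℕ) from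
      (Finset.sum_subset hsub (by
        intro i _ hi
        simp only [Finset.mem_insert, Finset.mem_singleton, not_or] at hi
        simp [hi.1, hi.2.1, hi.2.2])).symm]
    rw [Finset.sum_insert (by simp [Finset.mem_insert, hne01, hne02]),
      Finset.sum_insert (by simp [hne12]), Finset.sum_singleton]
    simp [hne01.symm, hne02.symm, hne12.symm, if_neg, hne01, hne02, hne12]
    push_cast
    ring
  -- real analysis part
  set QR : ℝ := (1 / 3) * ((A:ℝ) + B + C) * ((A:ℝ) + B + C + 2 * A * B * C)
      + (8 / 3) * ((A:ℝ) * B + (B:ℝ) * C + (C:ℝ) * A) with hQRdef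
  have hA1 : (1:ℝ) ≤ A := by exact_mod_cast hApos
  have hB1 : (1:ℝ) ≤ B := by exact_mod_cast hBpos
  have hC1 : (1:ℝ) ≤ C := by exact_mod_cast hCpos
  have hQnn : 0 ≤ QR := by
    rw [hQRdef]; positivity
  have hsqrt : Real.sqrt QR < 2*(m:ℝ) + ((A:ℝ) + B + C) := by
    have : (m:ℝ) > (1/2) * (Real.sqrt QR - A - B - C) := hm
    linarith
  have hsqc := (Nat.cast_le (α := ℝ)).mpr (sqineq A B C hApos hle1 hle2)
  push_cast at hsqc
  have hQge : ((A:ℝ) + B + C - 2)^2 ≤ QR := by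
    rw [hQRdef]; nlinarith [hsqc, hA1, hB1, hC1,
      mul_nonneg (mul_nonneg (by linarith : (0:ℝ) ≤ (A:ℝ)) (by linarith : (0:ℝ) ≤ (B:ℝ))) (by linarith : (0:ℝ) ≤ (C:ℝ))]
  have hsge : (A:ℝ) + B + C - 2 ≤ Real.sqrt QR := by
    rw [show ((A:ℝ) + B + C - 2) = Real.sqrt (((A:ℝ) + B + C - 2)^2) from
      (Real.sqrt_sq (by linarith)).symm]
    exact Real.sqrt_le_sqrt hQge
  have hm0 : 0 ≤ m := by
    have : (m:ℝ) > -1 := by linarith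
    have : (-1:ℤ) < m := by exact_mod_cast this
    omega
  have hkZ := keyIneq A B C hApos hBpos hCpos hAB hAC hBC m hm0 hnr
  have hkc : 4*(m:ℝ)*((m:ℝ)+A+B+C) ≤ (A:ℝ)*B*C*((A:ℝ)+B) := by exact_mod_cast hkZ
  have htN := tineq A B C hApos hle1 hle2 hAB hBC
  have htc : 3*((A:ℝ)*B*C)*((A:ℝ)+B) + 2*((A:ℝ)*A+(B:ℝ)*B+(C:ℝ)*C)
      ≤ 2*((A:ℝ)*B*C)*((A:ℝ)+B+C) + 4*((A:ℝ)*B+(B:ℝ)*C+(C:ℝ)*A) := by exact_mod_cast htN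
  have h1 : Real.sqrt QR * Real.sqrt QR = QR := Real.mul_self_sqrt hQnn
  have h2 : Real.sqrt QR * Real.sqrt QR
      < (2*(m:ℝ) + ((A:ℝ) + B + C)) * (2*(m:ℝ) + ((A:ℝ) + B + C)) :=
    mul_self_lt_mul_self (Real.sqrt_nonneg QR) hsqrt
  have hsq : QR < (2*(m:ℝ) + ((A:ℝ) + B + C)) * (2*(m:ℝ) + ((A:ℝ) + B + C)) := by
    rw [← h1]; exact h2
  rw [hQRdef] at hsq
  nlinarith [hsq, hkc, htc]
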